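/- Let K = Cone{x_1, …, x_m} ⊆ ℝ^n and suppose there exist indices i_1, …, i_s and positive reals c_{i_1}, …, c_{i_s} with Σ_j c_{i_j} x_{i_j} = 0. Then K = ⋃_{j=1}^s Cone{ x_l | l ≠ i_j }. -/
import Mathlib


/-- If `K = Cone{x 1, …, x m}` and there is a nonempty set `I` of indices
and positive reals `c i` (`i ∈ I`) with `∑ i ∈ I, c i • x i = 0`, then
`K = ⋃ j ∈ I, Cone{x l | l ≠ j}`. -/
theorem stmt6 (n m : ℕ) (x : Fin m → EuclideanSpace ℝ (Fin n))
    (I : Finset (Fin m)) (hI : I.Nonempty) (c : Fin m → ℝ)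
    (hc : ∀ i ∈ I, 0 < c i) (hsum : ∑ i ∈ I, c i • x i = 0) :
    {y : EuclideanSpace ℝ (Fin n) | ∃ t : Fin m → ℝ, (∀ i, 0 ≤ t i) ∧ y = ∑ i, t i • x i}
      = ⋃ j ∈ I, {y | ∃ t : Fin m → ℝ, (∀ i, 0 ≤ t i) ∧ t j = 0 ∧ y = ∑ i, t i • x i} := by
  ext y
  simp only [Set.mem_setOf_eq, Set.mem_iUnion]
  constructor
  · rintro ⟨t, ht, rfl⟩
    obtain ⟨j, hjI, hj⟩ := I.exists_min_image (fun i => t i / c i) hI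
    set lam := t j / c j with hlam
    have hlam0 : 0 ≤ lam := div_nonneg (ht j) (hc j hjI).le
    refine ⟨j, hjI, fun i => if i ∈ I then t i - lam * c i else t i, ?_, ?_, ?_⟩
    · intro i
      by_cases hi : i ∈ I
      · simp only [hi, if_true, sub_nonneg]
        have h1 := hj i hi
        have hci := hc i hi
        rw [div_le_div_iff₀ (hc j hjI) hci] at h1
        calc lam * c i = t j / c j * c i := rfl
          _ ≤ t i := by
              rw [div_mul_eq_mul_div, div_le_iff₀ (hc j hjI)]
              linarith
      · simpa [hi] using ht i
    · simp [hjI, hlam, div_mul_cancel₀ _ (hc j hjI).ne']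
    · have key : ∑ i, (if i ∈ I then t i - lam * c i else t i) • x i
          = ∑ i, t i • x i - lam • ∑ i ∈ I, c i • x i := by
        have h1 : ∀ i ∈ Finset.univ, (if i ∈ I then t i - lam * c i else t i) • x i
            = t i • x i - (if i ∈ I then (lam * c i) • x i else 0) := by
          intro i _
          by_cases hi : i ∈ I <;> simp [hi, sub_smul]
        rw [Finset.sum_congr rfl h1, Finset.sum_sub_distrib, Finset.sum_ite_mem,
          Finset.univ_inter, Finset.smul_sum]
        congr 1
        exact Finset.sum_congr rfl fun i _ => (mul_smul _ _ _)
      rw [key, hsum, smul_zero, sub_zero]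
  · rintro ⟨j, hjI, t, ht, htj, rfl⟩
    exact ⟨t, ht, rfl⟩
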